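/- Let w = 14253 ∈ S_5 (a vexillary permutation with ℓ(w) = 3). Then the Newton polytope of the degree-4 homogeneous component G_w^{(4)} of the Grothendieck polynomial G_w, i.e., the convex hull in ℝ^5 of supp(G_w^{(4)}), is not a Schubitope: there is no finite list I_1, …, I_k of nonempty subsets of [5] with Newton(G_w^{(4)}) = P(SM_5(I_1)) + … + P(SM_5(I_k)). -/

import Mathlib

open MvPolynomial

noncomputable section

/-- The defining recursion for the family of Grothendieck polynomials of permutations of `Fin n`
(written with 0-based positions): `G w₀ = x₀^{n-1} x₁^{n-2} ⋯`, and whenever `w j < w (j+1)`,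
`(x_j - x_{j+1}) * G w = f - s_j · f` where `f = (1 - x_{j+1}) * G (w s_j)`. -/
def IsGrothendieck (n : ℕ) (G : Equiv.Perm (Fin n) → MvPolynomial (Fin n) ℤ) : Prop :=
  G Fin.revPerm = ∏ i : Fin n, X i ^ (n - 1 - (i : ℕ)) ∧
    ∀ (w : Equiv.Perm (Fin n)) (j j' : Fin n), (j : ℕ) + 1 = (j' : ℕ) → w j < w j' →
      (X j - X j') * G w =
        (1 - X j') * G (w * Equiv.swap j j') -
          rename (⇑(Equiv.swap j j')) ((1 - X j') * G (w * Equiv.swap j j'))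

/-- `w` is vexillary: it avoids the pattern 2143. -/
def Vexillary {n : ℕ} (w : Equiv.Perm (Fin n)) : Prop :=
  ¬∃ i j k l : Fin n, i < j ∧ j < k ∧ k < l ∧ w j < w i ∧ w i < w l ∧ w l < w k

/-- The Rothe diagram of `w`, as a set of (row, column) pairs with 1-based indexing:
`D(w) = {(i,j) : i < w⁻¹(j), j < w(i)}`. -/
def RotheDiagram (n : ℕ) (w : Equiv.Perm (Fin n)) : Finset (ℕ × ℕ) :=
  Finset.image (fun p : Fin n × Fin n => ((p.1 : ℕ) + 1, (p.2 : ℕ) + 1))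
    (Finset.univ.filter fun p : Fin n × Fin n => p.1 < w.symm p.2 ∧ p.2 < w p.1)

/-- The rank function of the Rothe diagram: `r(i,j) = #{k < i : w(k) < j}` (1-based). -/
def RotheRank (n : ℕ) (w : Equiv.Perm (Fin n)) (s : ℕ × ℕ) : ℤ :=
  ((Finset.univ.filter fun k : Fin n => (k : ℕ) + 1 < s.1 ∧ (w k : ℕ) + 1 < s.2).card : ℤ)

/-- Two squares are linked with respect to the Rothe rank function:
`i - i' = r(i,j) - r(i',j')`. -/
def RLinked (n : ℕ) (w : Equiv.Perm (Fin n)) (s t : ℕ × ℕ) : Prop :=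
  (s.1 : ℤ) - (t.1 : ℤ) = RotheRank n w s - RotheRank n w t

/-- A bubbling diagram: a diagram `D` of squares (row ≥ 1, 1-based), a nonnegative rank
function `r` and a set `F ⊆ D` of dead squares, such that every dead square has a live square
strictly above it in its column with the prescribed rank difference to the closest such, and
dead squares in the same row have distinct ranks. -/
structure BubblingDiagram where
  D : Finset (ℕ × ℕ)
  r : ℕ × ℕ → ℤ
  F : Finset (ℕ × ℕ)
  F_subset : F ⊆ D
  r_nonneg : ∀ s ∈ D, 0 ≤ r s
  dead_live_above : ∀ s ∈ F, ∃ i' < s.1, (i', s.2) ∈ D ∧ (i', s.2) ∉ F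
  dead_rank : ∀ s ∈ F, ∀ i' < s.1, (i', s.2) ∈ D → (i', s.2) ∉ F →
    (∀ i'', i' < i'' → i'' < s.1 → (i'', s.2) ∈ D → (i'', s.2) ∈ F) →
    r s - r (i', s.2) = (s.1 : ℤ) - (i' : ℤ)
  dead_distinct : ∀ s ∈ F, ∀ t ∈ F, s.1 = t.1 → s.2 ≠ t.2 → r s ≠ r t

/-- A bubbling move: a live square `(i,j)` with `(i-1,j)` empty moves up one row,
its rank decreasing by one. -/
def IsBubbleMove (B C : BubblingDiagram) : Prop :=
  ∃ i j : ℕ, 2 ≤ i ∧ (i, j) ∈ B.D ∧ (i, j) ∉ B.F ∧ (i - 1, j) ∉ B.D ∧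
    C.D = insert (i - 1, j) (B.D.erase (i, j)) ∧ C.F = B.F ∧
    C.r = Function.update B.r (i - 1, j) (B.r (i, j) - 1)

/-- A K-bubbling move: a live square `(i,j)` with `(i-1,j)` empty, and such that no dead square
in row `i` has the same rank as `(i,j)`, moves up one row (rank decreasing by one), leaving
behind a dead copy of itself. -/
def IsKBubbleMove (B C : BubblingDiagram) : Prop :=
  ∃ i j : ℕ, 2 ≤ i ∧ (i, j) ∈ B.D ∧ (i, j) ∉ B.F ∧ (i - 1, j) ∉ B.D ∧
    (∀ k : ℕ, (i, k) ∈ B.F → B.r (i, k) ≠ B.r (i, j)) ∧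
    C.D = insert (i - 1, j) B.D ∧ C.F = insert (i, j) B.F ∧
    C.r = Function.update B.r (i - 1, j) (B.r (i, j) - 1)

/-- `C ∈ BD(B)`: `C` is obtainable from `B` by finitely many bubbling and K-bubbling moves. -/
def InBD (B C : BubblingDiagram) : Prop :=
  Relation.ReflTransGen (fun P Q => IsBubbleMove P Q ∨ IsKBubbleMove P Q) B C

/-- The Rothe bubbling diagram `𝒟(w) = (D(w), r_{D(w)}, ∅)`. -/
def RotheBD (n : ℕ) (w : Equiv.Perm (Fin n)) : BubblingDiagram where
  D := RotheDiagram n w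
  r := RotheRank n w
  F := ∅
  F_subset := Finset.empty_subset _
  r_nonneg := fun _ _ => Int.natCast_nonneg _
  dead_live_above := by simp
  dead_rank := by simp
  dead_distinct := by simp

/-- The weight of a diagram: its `i`-th coordinate is the number of squares in row `i+1`
(1-based row `i+1` corresponds to `i : Fin n`). -/
def diagWt (n : ℕ) (D : Finset (ℕ × ℕ)) (i : Fin n) : ℕ :=
  (D.filter fun s => s.1 = (i : ℕ) + 1).card

/-- Gale order on finite sets of naturals: same cardinality, and the `m`-th smallest element
of `R` is at most the `m`-th smallest element of `S`, for every `m`. -/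
def galeLE (R S : Finset ℕ) : Prop :=
  R.card = S.card ∧ ∀ m < R.card, (R.sort (· ≤ ·)).getD m 0 ≤ (S.sort (· ≤ ·)).getD m 0

/-- Column `j` of a diagram: the set of rows of its squares in column `j`. -/
def diagCol (D : Finset (ℕ × ℕ)) (j : ℕ) : Finset ℕ :=
  (D.filter fun s => s.2 = j).image Prod.fst

/-- Columnwise Gale order on diagrams. -/
def diagLE (C D : Finset (ℕ × ℕ)) : Prop := ∀ j : ℕ, galeLE (diagCol C j) (diagCol D j)

/-- The diagram lies in the grid `[n] × [n]` (1-based). -/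
def InGrid (n : ℕ) (D : Finset (ℕ × ℕ)) : Prop :=
  ∀ s ∈ D, s.1 ∈ Finset.Icc 1 n ∧ s.2 ∈ Finset.Icc 1 n

/-- M-convexity of a set of lattice points. -/
def MConvex {m : ℕ} (S : Set (Fin m → ℤ)) : Prop :=
  ∀ x ∈ S, ∀ y ∈ S, ∀ i : Fin m, y i < x i →
    ∃ j : Fin m, x j < y j ∧ (x - Pi.single i 1 + Pi.single j 1) ∈ S ∧
      (y - Pi.single j 1 + Pi.single i 1) ∈ S

open Classical in
/-- The rank function of the Schubert matroid `SM_n(I)`: the bases are the `B ⊆ [n]` with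
`B ≤ I` in Gale order, and `rank J = max {#(J ∩ B) : B a basis}`. -/
def schubertRank (n : ℕ) (I J : Finset ℕ) : ℕ :=
  ((Finset.Icc 1 n).powerset.filter fun B => galeLE B I).sup fun B => (J ∩ B).card

/-- The Schubert matroid polytope `P(SM_n(I)) ⊆ ℝⁿ`: the convex hull of the 0/1 indicator
vectors of the bases of `SM_n(I)` (coordinate `i : Fin n` stands for the element `i+1`). -/
def schubertPolytope (n : ℕ) (I : Finset ℕ) : Set (Fin n → ℝ) :=
  convexHull ℝ {v | ∃ B : Finset ℕ, B ⊆ Finset.Icc 1 n ∧ galeLE B I ∧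
    v = fun i : Fin n => if (i : ℕ) + 1 ∈ B then (1 : ℝ) else 0}

/-- A Schubitope: a finite Minkowski sum of Schubert matroid polytopes of nonempty
subsets of `[n]`. -/
def IsSchubitope (n : ℕ) (P : Set (Fin n → ℝ)) : Prop :=
  ∃ (k : ℕ) (I : Fin k → Finset ℕ), (∀ j, (I j).Nonempty ∧ I j ⊆ Finset.Icc 1 n) ∧
    P = {x | ∃ p : Fin k → Fin n → ℝ, (∀ j, p j ∈ schubertPolytope n (I j)) ∧ x = ∑ j, p j}

/-- A generalized permutahedron: the polytope cut out by a submodular function `z`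
with `z(∅) = 0`. -/
def IsGenPermutahedron {m : ℕ} (P : Set (Fin m → ℝ)) : Prop :=
  ∃ z : Finset (Fin m) → ℝ, z ∅ = 0 ∧
    (∀ A B : Finset (Fin m), z (A ∪ B) + z (A ∩ B) ≤ z A + z B) ∧
    P = {t | (∀ A : Finset (Fin m), ∑ i ∈ A, t i ≤ z A) ∧ ∑ i, t i = z Finset.univ}

/-- The padding sets `S^{(k,s)}`: `S^{(0,s)} = S` and `S^{(k,s)}` is obtained from
`S^{(k-1,s)}` by inserting the largest `i ∈ [1, s)` not already present (when one exists). -/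
def pad (S : Finset ℕ) (s : ℕ) : ℕ → Finset ℕ
  | 0 => S
  | k + 1 =>
      if h : ((Finset.Ico 1 s).filter fun i => i ∉ pad S s k).Nonempty then
        insert (((Finset.Ico 1 s).filter fun i => i ∉ pad S s k).max' h) (pad S s k)
      else pad S s k

/-- `d = s - #{i ∈ S : i ≤ s}`. -/
def padDepth (S : Finset ℕ) (s : ℕ) : ℕ := s - (S.filter fun i => i ≤ s).card

/-- The order `I ≺ J`: `max (I \ J) ≤ max (J \ I)` (with the convention `max ∅ = 0`). -/
def maxPrec (I J : Finset ℕ) : Prop := (I \ J).sup id ≤ (J \ I).sup id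

/-- Rows of the live squares of column `j` of a bubbling diagram. -/
def liveCol (B : BubblingDiagram) (j : ℕ) : Finset ℕ :=
  ((B.D \ B.F).filter fun s => s.2 = j).image Prod.fst

/-- The row of the `a`-th highest live square of column `j` (`a` is 1-based; highest means
smallest row index). -/
def nthLiveRow (B : BubblingDiagram) (j a : ℕ) : ℕ :=
  ((liveCol B j).sort (· ≤ ·)).getD (a - 1) 0

/-- The number of squares of `D` strictly below `s` in its column. -/
def belowCount (D : Finset (ℕ × ℕ)) (s : ℕ × ℕ) : ℕ :=
  (D.filter fun t => t.2 = s.2 ∧ s.1 < t.1).card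

/-- The total order `≺` on the squares of a diagram: lower rows first; within a row, fewer
squares below first; ties broken by smaller column index. -/
def sqPrec (D : Finset (ℕ × ℕ)) (s t : ℕ × ℕ) : Prop :=
  t.1 < s.1 ∨ (s.1 = t.1 ∧ belowCount D s < belowCount D t) ∨
    (s.1 = t.1 ∧ belowCount D s = belowCount D t ∧ s.2 < t.2)

end

/-- The permutation `w = 14253 ∈ S₅`, in 0-based form `0, 3, 1, 4, 2`. -/
def w14253 : Equiv.Perm (Fin 5) :=
  ⟨![0, 3, 1, 4, 2], ![0, 2, 4, 1, 3], by decide, by decide⟩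


noncomputable section
open MvPolynomial

namespace Stmt19Aux

set_option maxHeartbeats 4000000

instance (R S : Finset ℕ) : Decidable (galeLE R S) := by
  unfold galeLE; infer_instance

def E (f : Fin 5 → ℕ) : Fin 5 →₀ ℕ := Finsupp.equivFunOnFinite.symm f

lemma E_apply (f : Fin 5 → ℕ) (i : Fin 5) : E f i = f i := rfl

lemma E_inj {f g : Fin 5 → ℕ} (h : f ≠ g) : E f ≠ E g :=
  fun hc => h (Finsupp.equivFunOnFinite.symm.injective hc)

lemma Esingles (f : Fin 5 → ℕ) : E f = Finsupp.single (0:Fin 5) (f 0) + Finsupp.single 1 (f 1)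
    + Finsupp.single 2 (f 2) + Finsupp.single 3 (f 3) + Finsupp.single 4 (f 4) := by
  ext i; fin_cases i <;> simp [E_apply, Finsupp.single_apply]

lemma monE (f : Fin 5 → ℕ) (c : ℤ) :
    (monomial (E f) c : MvPolynomial (Fin 5) ℤ) =
      C c * X 0 ^ f 0 * X 1 ^ f 1 * X 2 ^ f 2 * X 3 ^ f 3 * X 4 ^ f 4 := by
  rw [Esingles, monomial_add_single, monomial_add_single, monomial_add_single,
    monomial_add_single, ← C_mul_X_pow_eq_monomial]

lemma degE (f : Fin 5 → ℕ) : (E f).degree = f 0 + f 1 + f 2 + f 3 + f 4 := by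
  rw [show (E f).degree = ∑ i ∈ (E f).support, E f i from rfl,
    Finset.sum_subset (Finset.subset_univ _) (fun i _ h => Finsupp.notMem_support_iff.mp h),
    Fin.sum_univ_five]
  rfl

lemma homE (f : Fin 5 → ℕ) (c : ℤ) (d : ℕ) (h : f 0 + f 1 + f 2 + f 3 + f 4 = d) :
    (monomial (E f) c : MvPolynomial (Fin 5) ℤ) ∈ homogeneousSubmodule (Fin 5) ℤ d :=
  (mem_homogeneousSubmodule _ _).2 (isHomogeneous_monomial _ ((degE f).trans h))

lemma monE2 (a0 a1 a2 a3 a4 : ℕ) (c : ℤ) :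
    (monomial (E ![a0,a1,a2,a3,a4]) c : MvPolynomial (Fin 5) ℤ) =
      C c * X 0 ^ a0 * X 1 ^ a1 * X 2 ^ a2 * X 3 ^ a3 * X 4 ^ a4 :=
  monE ![a0,a1,a2,a3,a4] c

lemma homE2 (a0 a1 a2 a3 a4 : ℕ) (c : ℤ) (d : ℕ) (h : a0 + a1 + a2 + a3 + a4 = d) :
    (monomial (E ![a0,a1,a2,a3,a4]) c : MvPolynomial (Fin 5) ℤ) ∈ homogeneousSubmodule (Fin 5) ℤ d :=
  homE ![a0,a1,a2,a3,a4] c d h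

lemma suppAdd (p q : MvPolynomial (Fin 5) ℤ) (h : Disjoint p.support q.support) :
    (p + q).support = p.support ∪ q.support := Finsupp.support_add_eq h

lemma suppMon (d : Fin 5 →₀ ℕ) (c : ℤ) (h : c ≠ 0) :
    (monomial d c : MvPolynomial (Fin 5) ℤ).support = {d} := by
  classical
  rw [support_monomial, if_neg h]

lemma Xne (i j : Fin 5) (h : i ≠ j) : (X i - X j : MvPolynomial (Fin 5) ℤ) ≠ 0 :=
  sub_ne_zero.mpr (fun hc => h (X_injective hc))

def w54321 : Equiv.Perm (Fin 5) := ⟨![4, 3, 2, 1, 0], ![4, 3, 2, 1, 0], by decide, by decide⟩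
def w45321 : Equiv.Perm (Fin 5) := ⟨![3, 4, 2, 1, 0], ![4, 3, 2, 0, 1], by decide, by decide⟩
def w45231 : Equiv.Perm (Fin 5) := ⟨![3, 4, 1, 2, 0], ![4, 2, 3, 0, 1], by decide, by decide⟩
def w45213 : Equiv.Perm (Fin 5) := ⟨![3, 4, 1, 0, 2], ![3, 2, 4, 0, 1], by decide, by decide⟩
def w45123 : Equiv.Perm (Fin 5) := ⟨![3, 4, 0, 1, 2], ![2, 3, 4, 0, 1], by decide, by decide⟩
def w41523 : Equiv.Perm (Fin 5) := ⟨![3, 0, 4, 1, 2], ![1, 3, 4, 0, 2], by decide, by decide⟩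
def w41253 : Equiv.Perm (Fin 5) := ⟨![3, 0, 1, 4, 2], ![1, 2, 4, 0, 3], by decide, by decide⟩

set_option maxHeartbeats 3200000 in
lemma part1 (G : Equiv.Perm (Fin 5) → MvPolynomial (Fin 5) ℤ) (hG : IsGrothendieck 5 G) :
    G w14253 = (-1)*X 0 ^ 2*X 1 ^ 2*X 2*X 3 + (1)*X 0 ^ 2*X 1 ^ 2*X 2 + (1)*X 0 ^ 2*X 1 ^ 2*X 3 + (-1)*X 0 ^ 2*X 1 ^ 2 + (2)*X 0 ^ 2*X 1*X 2*X 3 + (-2)*X 0 ^ 2*X 1*X 2 + (-2)*X 0 ^ 2*X 1*X 3 + (1)*X 0 ^ 2*X 1 + (-1)*X 0 ^ 2*X 2*X 3 + (1)*X 0 ^ 2*X 2 + (1)*X 0 ^ 2*X 3 + (2)*X 0*X 1 ^ 2*X 2*X 3 + (-2)*X 0*X 1 ^ 2*X 2 + (-2)*X 0*X 1 ^ 2*X 3 + (1)*X 0*X 1 ^ 2 + (-1)*X 0*X 1*X 2*X 3 + (1)*X 0*X 1*X 2 + (1)*X 0*X 1*X 3 + (-1)*X 1 ^ 2*X 2*X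 3 + (1)*X 1 ^ 2*X 2 + (1)*X 1 ^ 2*X 3 := by
  have s0 : G w54321 = X 0^4*X 1^3*X 2^2*X 3 := by
    rw [show w54321 = Fin.revPerm from by decide, hG.1, Fin.prod_univ_five]
    norm_num [show ((3:Fin 5):ℕ) = 3 from rfl, show ((4:Fin 5):ℕ) = 4 from rfl]
  have s1 : G w45321 = (1)*X 0 ^ 3*X 1 ^ 3*X 2 ^ 2*X 3 := by
    have h := hG.2 w45321 0 1 (by decide) (by decide)
    rw [show w45321 * Equiv.swap (0:Fin 5) 1 = w54321 from by decide, s0] at h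
    refine mul_left_cancel₀ (Xne 0 1 (by decide)) (h.trans ?_)
    simp only [map_sub, map_mul, map_one, map_pow, map_add, map_neg, map_ofNat, rename_X, Equiv.swap_apply_def, Fin.reduceEq, reduceIte]
    ring
  have s2 : G w45231 = (1)*X 0 ^ 3*X 1 ^ 3*X 2*X 3 := by
    have h := hG.2 w45231 2 3 (by decide) (by decide)
    rw [show w45231 * Equiv.swap (2:Fin 5) 3 = w45321 from by decide, s1] at h
    refine mul_left_cancel₀ (Xne 2 3 (by decide)) (h.trans ?_)
    simp only [map_sub, map_mul, map_one, map_pow, map_add, map_neg, map_ofNat, rename_X, Equiv.swap_apply_def, Fin.reduceEq, reduceIte]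
    ring
  have s3 : G w45213 = (1)*X 0 ^ 3*X 1 ^ 3*X 2 := by
    have h := hG.2 w45213 3 4 (by decide) (by decide)
    rw [show w45213 * Equiv.swap (3:Fin 5) 4 = w45231 from by decide, s2] at h
    refine mul_left_cancel₀ (Xne 3 4 (by decide)) (h.trans ?_)
    simp only [map_sub, map_mul, map_one, map_pow, map_add, map_neg, map_ofNat, rename_X, Equiv.swap_apply_def, Fin.reduceEq, reduceIte]
    ring
  have s4 : G w45123 = (1)*X 0 ^ 3*X 1 ^ 3 := by
    have h := hG.2 w45123 2 3 (by decide) (by decide)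
    rw [show w45123 * Equiv.swap (2:Fin 5) 3 = w45213 from by decide, s3] at h
    refine mul_left_cancel₀ (Xne 2 3 (by decide)) (h.trans ?_)
    simp only [map_sub, map_mul, map_one, map_pow, map_add, map_neg, map_ofNat, rename_X, Equiv.swap_apply_def, Fin.reduceEq, reduceIte]
    ring
  have s5 : G w41523 = (-1)*X 0 ^ 3*X 1 ^ 2*X 2 + (1)*X 0 ^ 3*X 1 ^ 2 + (-1)*X 0 ^ 3*X 1*X 2 ^ 2 + (1)*X 0 ^ 3*X 1*X 2 + (1)*X 0 ^ 3*X 2 ^ 2 := by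
    have h := hG.2 w41523 1 2 (by decide) (by decide)
    rw [show w41523 * Equiv.swap (1:Fin 5) 2 = w45123 from by decide, s4] at h
    refine mul_left_cancel₀ (Xne 1 2 (by decide)) (h.trans ?_)
    simp only [map_sub, map_mul, map_one, map_pow, map_add, map_neg, map_ofNat, rename_X, Equiv.swap_apply_def, Fin.reduceEq, reduceIte]
    ring
  have s6 : G w41253 = (1)*X 0 ^ 3*X 1*X 2*X 3 + (-1)*X 0 ^ 3*X 1*X 2 + (-1)*X 0 ^ 3*X 1*X 3 + (1)*X 0 ^ 3*X 1 + (-1)*X 0 ^ 3*X 2*X 3 + (1)*X 0 ^ 3*X 2 + (1)*X 0 ^ 3*X 3 := by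
    have h := hG.2 w41253 2 3 (by decide) (by decide)
    rw [show w41253 * Equiv.swap (2:Fin 5) 3 = w41523 from by decide, s5] at h
    refine mul_left_cancel₀ (Xne 2 3 (by decide)) (h.trans ?_)
    simp only [map_sub, map_mul, map_one, map_pow, map_add, map_neg, map_ofNat, rename_X, Equiv.swap_apply_def, Fin.reduceEq, reduceIte]
    ring
  have s7 : G w14253 = (-1)*X 0 ^ 2*X 1 ^ 2*X 2*X 3 + (1)*X 0 ^ 2*X 1 ^ 2*X 2 + (1)*X 0 ^ 2*X 1 ^ 2*X 3 + (-1)*X 0 ^ 2*X 1 ^ 2 + (2)*X 0 ^ 2*X 1*X 2*X 3 + (-2)*X 0 ^ 2*X 1*X 2 + (-2)*X 0 ^ 2*X 1*X 3 + (1)*X 0 ^ 2*X 1 + (-1)*X 0 ^ 2*X 2*X 3 + (1)*X 0 ^ 2*X 2 + (1)*X 0 ^ 2*X 3 + (2)*X 0*X 1 ^ 2*X 2*X 3 + (-2)*X 0*X 1 ^ 2*X 2 + (-2)*X 0*X 1 ^ 2*X 3 + (1)*X 0*X 1 ^ 2 + (-1)*X 0*X 1*X 2*X 3 + (1)*X 0*X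 1*X 2 + (1)*X 0*X 1*X 3 + (-1)*X 1 ^ 2*X 2*X 3 + (1)*X 1 ^ 2*X 2 + (1)*X 1 ^ 2*X 3 := by
    have h := hG.2 w14253 0 1 (by decide) (by decide)
    rw [show w14253 * Equiv.swap (0:Fin 5) 1 = w41253 from by decide, s6] at h
    refine mul_left_cancel₀ (Xne 0 1 (by decide)) (h.trans ?_)
    simp only [map_sub, map_mul, map_one, map_pow, map_add, map_neg, map_ofNat, rename_X, Equiv.swap_apply_def, Fin.reduceEq, reduceIte]
    ring
  exact s7

lemma part2 (G : Equiv.Perm (Fin 5) → MvPolynomial (Fin 5) ℤ) (hG : IsGrothendieck 5 G) :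
    homogeneousComponent 4 (G w14253) = monomial (E ![0, 2, 1, 1, 0]) (-1) + (monomial (E ![1, 1, 1, 1, 0]) (-1) + (monomial (E ![1, 2, 0, 1, 0]) (-2) + (monomial (E ![1, 2, 1, 0, 0]) (-2) + (monomial (E ![2, 0, 1, 1, 0]) (-1) + (monomial (E ![2, 1, 0, 1, 0]) (-2) + (monomial (E ![2, 1, 1, 0, 0]) (-2) + (monomial (E ![2, 2, 0, 0, 0]) (-1)))))))) := by
  have hM : (monomial (E ![0, 2, 0, 1, 0]) (1) + (monomial (E ![0, 2, 1, 0, 0]) (1) + (monomial (E ![1, 1, 0, 1, 0]) (1) + (monomial (E ![1, 1, 1, 0, 0]) (1) + (monomial (E ![1, 2, 0, 0, 0]) (1) + (monomial (E ![2, 0, 0, 1, 0]) (1) + (monomial (E ![2, 0, 1, 0, 0]) (1) + (monomial (E ![2, 1, 0, 0, 0]) (1))))))))) + (monomial (E ![0, 2, 1, 1, 0]) (-1) + (monomial (E ![1, 1, 1, 1, 0]) (-1) + (monomial (E ![1, 2, 0, 1, 0]) (-2) + (monomial (E ![1, 2, 1, 0, 0]) (-2) + (monomial (E ![2, 0, 1,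 1, 0]) (-1) + (monomial (E ![2, 1, 0, 1, 0]) (-2) + (monomial (E ![2, 1, 1, 0, 0]) (-2) + (monomial (E ![2, 2, 0, 0, 0]) (-1))))))))) + (monomial (E ![1, 2, 1, 1, 0]) (2) + (monomial (E ![2, 1, 1, 1, 0]) (2) + (monomial (E ![2, 2, 0, 1, 0]) (1) + (monomial (E ![2, 2, 1, 0, 0]) (1))))) + (monomial (E ![2, 2, 1, 1, 0]) (-1)) = (-1)*X 0 ^ 2*X 1 ^ 2*X 2*X 3 + (1)*X 0 ^ 2*X 1 ^ 2*X 2 + (1)*X 0 ^ 2*X 1 ^ 2*X 3 + (-1)*X 0 ^ 2*X 1 ^ 2 + (2)*X 0 ^ 2*X 1*X 2*X 3 + (-2)*X 0 ^ 2*X 1*X 2 + (-2)*X 0 ^ 2*X 1*X 3 + (1)*X 0 ^ 2*X 1 + (-1)*X 0 ^ 2*X 2*X 3 + (1)*X 0 ^ 2*X 2 + (1)*X 0 ^ 2*X 3 + (2)*X 0*X 1 ^ 2*X 2*X 3 + (-2)*X 0*X 1 ^ 2*X 2 + (-2)*X 0*X 1 ^ 2*X 3 + (1)*X 0*X 1 ^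 2 + (-1)*X 0*X 1*X 2*X 3 + (1)*X 0*X 1*X 2 + (1)*X 0*X 1*X 3 + (-1)*X 1 ^ 2*X 2*X 3 + (1)*X 1 ^ 2*X 2 + (1)*X 1 ^ 2*X 3 := by
    simp only [monE2, map_neg, map_one, map_ofNat]
    push_cast
    ring
  rw [part1 G hG, ← hM, map_add, map_add, map_add]
  have hm3 : (monomial (E ![0, 2, 0, 1, 0]) (1) + (monomial (E ![0, 2, 1, 0, 0]) (1) + (monomial (E ![1, 1, 0, 1, 0]) (1) + (monomial (E ![1, 1, 1, 0, 0]) (1) + (monomial (E ![1, 2, 0, 0, 0]) (1) + (monomial (E ![2, 0, 0, 1, 0]) (1) + (monomial (E ![2, 0, 1, 0, 0]) (1) + (monomial (E ![2, 1, 0, 0, 0]) (1))))))))) ∈ homogeneousSubmodule (Fin 5) ℤ 3 := Submodule.add_mem _ (homE2 0 2 0 1 0 (1) 3 (by norm_num)) (Submodule.add_mem _ (homE2 0 2 1 0 0 (1) 3 (by norm_num)) (Submodule.add_mem _ (homE2 1 1 0 1 0 (1) 3 (by norm_num)) (Submodule.add_mem _ (homE2 1 1 1 0 0 (1) 3 (by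 norm_num)) (Submodule.add_mem _ (homE2 1 2 0 0 0 (1) 3 (by norm_num)) (Submodule.add_mem _ (homE2 2 0 0 1 0 (1) 3 (by norm_num)) (Submodule.add_mem _ (homE2 2 0 1 0 0 (1) 3 (by norm_num)) (homE2 2 1 0 0 0 (1) 3 (by norm_num))))))))
  have hm4 : (monomial (E ![0, 2, 1, 1, 0]) (-1) + (monomial (E ![1, 1, 1, 1, 0]) (-1) + (monomial (E ![1, 2, 0, 1, 0]) (-2) + (monomial (E ![1, 2, 1, 0, 0]) (-2) + (monomial (E ![2, 0, 1, 1, 0]) (-1) + (monomial (E ![2, 1, 0, 1, 0]) (-2) + (monomial (E ![2, 1, 1, 0, 0]) (-2) + (monomial (E ![2, 2, 0, 0, 0]) (-1))))))))) ∈ homogeneousSubmodule (Fin 5) ℤ 4 := Submodule.add_mem _ (homE2 0 2 1 1 0 (-1) 4 (by norm_num)) (Submodule.add_mem _ (homE2 1 1 1 1 0 (-1) 4 (by norm_num)) (Submodule.add_mem _ (homE2 1 2 0 1 0 (-2) 4 (by norm_num)) (Submodule.add_mem _ (homE2 1 2 1 0 0 (-2) 4 (by norm_num)) (Submodule.add_mem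 _ (homE2 2 0 1 1 0 (-1) 4 (by norm_num)) (Submodule.add_mem _ (homE2 2 1 0 1 0 (-2) 4 (by norm_num)) (Submodule.add_mem _ (homE2 2 1 1 0 0 (-2) 4 (by norm_num)) (homE2 2 2 0 0 0 (-1) 4 (by norm_num))))))))
  have hm5 : (monomial (E ![1, 2, 1, 1, 0]) (2) + (monomial (E ![2, 1, 1, 1, 0]) (2) + (monomial (E ![2, 2, 0, 1, 0]) (1) + (monomial (E ![2, 2, 1, 0, 0]) (1))))) ∈ homogeneousSubmodule (Fin 5) ℤ 5 := Submodule.add_mem _ (homE2 1 2 1 1 0 (2) 5 (by norm_num)) (Submodule.add_mem _ (homE2 2 1 1 1 0 (2) 5 (by norm_num)) (Submodule.add_mem _ (homE2 2 2 0 1 0 (1) 5 (by norm_num)) (homE2 2 2 1 0 0 (1) 5 (by norm_num))))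
  have hm6 : (monomial (E ![2, 2, 1, 1, 0]) (-1)) ∈ homogeneousSubmodule (Fin 5) ℤ 6 := homE2 2 2 1 1 0 (-1) 6 (by norm_num)
  rw [homogeneousComponent_of_mem hm3, homogeneousComponent_of_mem hm4, homogeneousComponent_of_mem hm5, homogeneousComponent_of_mem hm6]
  norm_num

lemma part3 (G : Equiv.Perm (Fin 5) → MvPolynomial (Fin 5) ℤ) (hG : IsGrothendieck 5 G) :
    (homogeneousComponent 4 (G w14253)).support = ({E ![0, 2, 1, 1, 0], E ![1, 1, 1, 1, 0], E ![1, 2, 0, 1, 0], E ![1, 2, 1, 0, 0], E ![2, 0, 1, 1, 0], E ![2, 1, 0, 1, 0], E ![2, 1, 1, 0, 0], E ![2, 2, 0, 0, 0]} : Finset (Fin 5 →₀ ℕ)) := by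
  rw [part2 G hG]
  have t7 : (monomial (E ![2, 2, 0, 0, 0]) (-1) : MvPolynomial (Fin 5) ℤ).support = {E ![2, 2, 0, 0, 0]} := suppMon _ _ (by norm_num)
  have t6 : (monomial (E ![2, 1, 1, 0, 0]) (-2) + (monomial (E ![2, 2, 0, 0, 0]) (-1)) : MvPolynomial (Fin 5) ℤ).support = {E ![2, 1, 1, 0, 0], E ![2, 2, 0, 0, 0]} := by
    have hd : Disjoint ((monomial (E ![2, 1, 1, 0, 0]) (-2) : MvPolynomial (Fin 5) ℤ)).support ({E ![2, 2, 0, 0, 0]} : Finset (Fin 5 →₀ ℕ)) := by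
      rw [suppMon _ _ (by norm_num), Finset.disjoint_singleton_left]
      simp only [Finset.mem_insert, Finset.mem_singleton, not_or]
      exact E_inj (show ![2, 1, 1, 0, 0] ≠ ![2, 2, 0, 0, 0] by decide)
    rw [suppAdd _ _ (by rw [t7]; exact hd), suppMon _ _ (by norm_num), t7, ← Finset.insert_eq]
  have t5 : (monomial (E ![2, 1, 0, 1, 0]) (-2) + (monomial (E ![2, 1, 1, 0, 0]) (-2) + (monomial (E ![2, 2, 0, 0, 0]) (-1))) : MvPolynomial (Fin 5) ℤ).support = {E ![2, 1, 0, 1, 0], E ![2, 1, 1, 0, 0], E ![2, 2, 0, 0, 0]} := by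
    have hd : Disjoint ((monomial (E ![2, 1, 0, 1, 0]) (-2) : MvPolynomial (Fin 5) ℤ)).support ({E ![2, 1, 1, 0, 0], E ![2, 2, 0, 0, 0]} : Finset (Fin 5 →₀ ℕ)) := by
      rw [suppMon _ _ (by norm_num), Finset.disjoint_singleton_left]
      simp only [Finset.mem_insert, Finset.mem_singleton, not_or]
      exact ⟨E_inj (show ![2, 1, 0, 1, 0] ≠ ![2, 1, 1, 0, 0] by decide), E_inj (show ![2, 1, 0, 1, 0] ≠ ![2, 2, 0, 0, 0] by decide)⟩
    rw [suppAdd _ _ (by rw [t6]; exact hd), suppMon _ _ (by norm_num), t6, ← Finset.insert_eq]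
  have t4 : (monomial (E ![2, 0, 1, 1, 0]) (-1) + (monomial (E ![2, 1, 0, 1, 0]) (-2) + (monomial (E ![2, 1, 1, 0, 0]) (-2) + (monomial (E ![2, 2, 0, 0, 0]) (-1)))) : MvPolynomial (Fin 5) ℤ).support = {E ![2, 0, 1, 1, 0], E ![2, 1, 0, 1, 0], E ![2, 1, 1, 0, 0], E ![2, 2, 0, 0, 0]} := by
    have hd : Disjoint ((monomial (E ![2, 0, 1, 1, 0]) (-1) : MvPolynomial (Fin 5) ℤ)).support ({E ![2, 1, 0, 1, 0], E ![2, 1, 1, 0, 0], E ![2, 2, 0, 0, 0]} : Finset (Fin 5 →₀ ℕ)) := by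
      rw [suppMon _ _ (by norm_num), Finset.disjoint_singleton_left]
      simp only [Finset.mem_insert, Finset.mem_singleton, not_or]
      exact ⟨E_inj (show ![2, 0, 1, 1, 0] ≠ ![2, 1, 0, 1, 0] by decide), E_inj (show ![2, 0, 1, 1, 0] ≠ ![2, 1, 1, 0, 0] by decide), E_inj (show ![2, 0, 1, 1, 0] ≠ ![2, 2, 0, 0, 0] by decide)⟩
    rw [suppAdd _ _ (by rw [t5]; exact hd), suppMon _ _ (by norm_num), t5, ← Finset.insert_eq]
  have t3 : (monomial (E ![1, 2, 1, 0, 0]) (-2) + (monomial (E ![2, 0, 1, 1, 0]) (-1) + (monomial (E ![2, 1, 0, 1, 0]) (-2) + (monomial (E ![2, 1, 1, 0, 0]) (-2) + (monomial (E ![2, 2, 0, 0, 0]) (-1))))) : MvPolynomial (Fin 5) ℤ).support = {E ![1, 2, 1, 0, 0], E ![2, 0, 1, 1, 0], E ![2, 1, 0, 1, 0], E ![2, 1, 1, 0, 0], E ![2, 2, 0, 0, 0]} := by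
    have hd : Disjoint ((monomial (E ![1, 2, 1, 0, 0]) (-2) : MvPolynomial (Fin 5) ℤ)).support ({E ![2, 0, 1, 1, 0], E ![2, 1, 0, 1, 0], E ![2, 1, 1, 0, 0], E ![2, 2, 0, 0, 0]} : Finset (Fin 5 →₀ ℕ)) := by
      rw [suppMon _ _ (by norm_num), Finset.disjoint_singleton_left]
      simp only [Finset.mem_insert, Finset.mem_singleton, not_or]
      exact ⟨E_inj (show ![1, 2, 1, 0, 0] ≠ ![2, 0, 1, 1, 0] by decide), E_inj (show ![1, 2, 1, 0, 0] ≠ ![2, 1, 0, 1, 0] by decide), E_inj (show ![1, 2, 1, 0, 0] ≠ ![2, 1, 1, 0, 0] by decide), E_inj (show ![1, 2, 1, 0, 0] ≠ ![2, 2, 0, 0, 0] by decide)⟩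
    rw [suppAdd _ _ (by rw [t4]; exact hd), suppMon _ _ (by norm_num), t4, ← Finset.insert_eq]
  have t2 : (monomial (E ![1, 2, 0, 1, 0]) (-2) + (monomial (E ![1, 2, 1, 0, 0]) (-2) + (monomial (E ![2, 0, 1, 1, 0]) (-1) + (monomial (E ![2, 1, 0, 1, 0]) (-2) + (monomial (E ![2, 1, 1, 0, 0]) (-2) + (monomial (E ![2, 2, 0, 0, 0]) (-1)))))) : MvPolynomial (Fin 5) ℤ).support = {E ![1, 2, 0, 1, 0], E ![1, 2, 1, 0, 0], E ![2, 0, 1, 1, 0], E ![2, 1, 0, 1, 0], E ![2, 1, 1, 0, 0], E ![2, 2, 0, 0, 0]} := by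
    have hd : Disjoint ((monomial (E ![1, 2, 0, 1, 0]) (-2) : MvPolynomial (Fin 5) ℤ)).support ({E ![1, 2, 1, 0, 0], E ![2, 0, 1, 1, 0], E ![2, 1, 0, 1, 0], E ![2, 1, 1, 0, 0], E ![2, 2, 0, 0, 0]} : Finset (Fin 5 →₀ ℕ)) := by
      rw [suppMon _ _ (by norm_num), Finset.disjoint_singleton_left]
      simp only [Finset.mem_insert, Finset.mem_singleton, not_or]
      exact ⟨E_inj (show ![1, 2, 0, 1, 0] ≠ ![1, 2, 1, 0, 0] by decide), E_inj (show ![1, 2, 0, 1, 0] ≠ ![2, 0, 1, 1, 0] by decide), E_inj (show ![1, 2, 0, 1, 0] ≠ ![2, 1, 0, 1, 0] by decide), E_inj (show ![1, 2, 0, 1, 0] ≠ ![2, 1, 1, 0, 0] by decide), E_inj (show ![1, 2, 0, 1, 0] ≠ ![2, 2, 0, 0, 0] by decide)⟩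
    rw [suppAdd _ _ (by rw [t3]; exact hd), suppMon _ _ (by norm_num), t3, ← Finset.insert_eq]
  have t1 : (monomial (E ![1, 1, 1, 1, 0]) (-1) + (monomial (E ![1, 2, 0, 1, 0]) (-2) + (monomial (E ![1, 2, 1, 0, 0]) (-2) + (monomial (E ![2, 0, 1, 1, 0]) (-1) + (monomial (E ![2, 1, 0, 1, 0]) (-2) + (monomial (E ![2, 1, 1, 0, 0]) (-2) + (monomial (E ![2, 2, 0, 0, 0]) (-1))))))) : MvPolynomial (Fin 5) ℤ).support = {E ![1, 1, 1, 1, 0], E ![1, 2, 0, 1, 0], E ![1, 2, 1, 0, 0], E ![2, 0, 1, 1, 0], E ![2, 1, 0, 1, 0], E ![2, 1, 1, 0, 0], E ![2, 2, 0, 0, 0]} := by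
    have hd : Disjoint ((monomial (E ![1, 1, 1, 1, 0]) (-1) : MvPolynomial (Fin 5) ℤ)).support ({E ![1, 2, 0, 1, 0], E ![1, 2, 1, 0, 0], E ![2, 0, 1, 1, 0], E ![2, 1, 0, 1, 0], E ![2, 1, 1, 0, 0], E ![2, 2, 0, 0, 0]} : Finset (Fin 5 →₀ ℕ)) := by
      rw [suppMon _ _ (by norm_num), Finset.disjoint_singleton_left]
      simp only [Finset.mem_insert, Finset.mem_singleton, not_or]
      exact ⟨E_inj (show ![1, 1, 1, 1, 0] ≠ ![1, 2, 0, 1, 0] by decide), E_inj (show ![1, 1, 1, 1, 0] ≠ ![1, 2, 1, 0, 0] by decide), E_inj (show ![1, 1, 1, 1, 0] ≠ ![2, 0, 1, 1, 0] by decide), E_inj (show ![1, 1, 1, 1, 0] ≠ ![2, 1, 0, 1, 0] by decide), E_inj (show ![1, 1, 1, 1, 0] ≠ ![2, 1, 1, 0, 0] by decide), E_inj (show ![1, 1, 1, 1, 0] ≠ ![2, 2, 0, 0, 0] by decide)⟩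
    rw [suppAdd _ _ (by rw [t2]; exact hd), suppMon _ _ (by norm_num), t2, ← Finset.insert_eq]
  have t0 : (monomial (E ![0, 2, 1, 1, 0]) (-1) + (monomial (E ![1, 1, 1, 1, 0]) (-1) + (monomial (E ![1, 2, 0, 1, 0]) (-2) + (monomial (E ![1, 2, 1, 0, 0]) (-2) + (monomial (E ![2, 0, 1, 1, 0]) (-1) + (monomial (E ![2, 1, 0, 1, 0]) (-2) + (monomial (E ![2, 1, 1, 0, 0]) (-2) + (monomial (E ![2, 2, 0, 0, 0]) (-1)))))))) : MvPolynomial (Fin 5) ℤ).support = {E ![0, 2, 1, 1, 0], E ![1, 1, 1, 1, 0], E ![1, 2, 0, 1, 0], E ![1, 2, 1, 0, 0], E ![2, 0, 1, 1, 0], E ![2, 1, 0, 1, 0], E ![2, 1, 1, 0, 0], E ![2, 2, 0, 0, 0]} := by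
    have hd : Disjoint ((monomial (E ![0, 2, 1, 1, 0]) (-1) : MvPolynomial (Fin 5) ℤ)).support ({E ![1, 1, 1, 1, 0], E ![1, 2, 0, 1, 0], E ![1, 2, 1, 0, 0], E ![2, 0, 1, 1, 0], E ![2, 1, 0, 1, 0], E ![2, 1, 1, 0, 0], E ![2, 2, 0, 0, 0]} : Finset (Fin 5 →₀ ℕ)) := by
      rw [suppMon _ _ (by norm_num), Finset.disjoint_singleton_left]
      simp only [Finset.mem_insert, Finset.mem_singleton, not_or]
      exact ⟨E_inj (show ![0, 2, 1, 1, 0] ≠ ![1, 1, 1, 1, 0] by decide), E_inj (show ![0, 2, 1, 1, 0] ≠ ![1, 2, 0, 1, 0] by decide), E_inj (show ![0, 2, 1, 1, 0] ≠ ![1, 2, 1, 0, 0] by decide), E_inj (show ![0, 2, 1, 1, 0] ≠ ![2, 0, 1, 1, 0] by decide), E_inj (show ![0, 2, 1, 1, 0] ≠ ![2, 1, 0, 1, 0] by decide), E_inj (show ![0, 2, 1, 1, 0] ≠ ![2, 1, 1, 0, 0] by decide), E_inj (show ![0, 2, 1, 1, 0] ≠ ![2, 2, 0, 0, 0] by 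decide)⟩
    rw [suppAdd _ _ (by rw [t1]; exact hd), suppMon _ _ (by norm_num), t1, ← Finset.insert_eq]
  exact t0

end Stmt19Aux
end
namespace Stmt19Aux

set_option maxHeartbeats 1000000

lemma Eval0 (a b c d e : ℕ) : (E ![a,b,c,d,e]) 0 = a := rfl
lemma Eval1 (a b c d e : ℕ) : (E ![a,b,c,d,e]) 1 = b := rfl
lemma Eval2 (a b c d e : ℕ) : (E ![a,b,c,d,e]) 2 = c := rfl
lemma Eval3 (a b c d e : ℕ) : (E ![a,b,c,d,e]) 3 = d := rfl
lemma Eval4 (a b c d e : ℕ) : (E ![a,b,c,d,e]) 4 = e := rfl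

lemma sort_pair {x y : ℕ} (h : x < y) :
    Finset.sort ({x, y} : Finset ℕ) (· ≤ ·) = [x, y] := by
  have h1 : ∀ b ∈ ({y} : Finset ℕ), x ≤ b := fun b hb => by
    rw [Finset.mem_singleton.mp hb]; exact h.le
  have h2 : x ∉ ({y} : Finset ℕ) := by simp [h.ne]
  exact (Finset.sort_insert _ h1 h2).trans (by rw [Finset.sort_singleton])

lemma pair_cases {I : Finset ℕ} (hc : I.card = 2) : ∃ x y, x < y ∧ I = {x, y} := by
  obtain ⟨x, y, hxy, rfl⟩ := Finset.card_eq_two.mp hc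
  rcases hxy.lt_or_gt with h | h
  · exact ⟨x, y, h, rfl⟩
  · exact ⟨y, x, h, Finset.pair_comm x y⟩

lemma gale1 {I : Finset ℕ} (hsub : I ⊆ Finset.Icc 1 5) (hc : I.card = 1) :
    galeLE {1} I := by
  obtain ⟨x, rfl⟩ := Finset.card_eq_one.mp hc
  have hx : 1 ≤ x := (Finset.mem_Icc.mp (hsub (Finset.mem_singleton_self x))).1
  refine ⟨by simp, fun m hm => ?_⟩
  rw [Finset.card_singleton] at hm
  interval_cases m
  rw [Finset.sort_singleton, Finset.sort_singleton]
  simpa using hx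

lemma gale12 {I : Finset ℕ} (hsub : I ⊆ Finset.Icc 1 5) (hc : I.card = 2) :
    galeLE {1, 2} I := by
  obtain ⟨x, y, hxy, rfl⟩ := pair_cases hc
  have hx : 1 ≤ x := (Finset.mem_Icc.mp (hsub (by simp))).1
  have hy : 2 ≤ y := by omega
  refine ⟨by rw [Finset.card_pair (by norm_num), Finset.card_pair hxy.ne], fun m hm => ?_⟩
  rw [Finset.card_pair (by norm_num : (1:ℕ) ≠ 2)] at hm
  rw [sort_pair (by norm_num : (1:ℕ) < 2), sort_pair hxy]
  interval_cases m <;> simp [List.getD] <;> omega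

lemma gale13 {I : Finset ℕ} (hsub : I ⊆ Finset.Icc 1 5) (hc : I.card = 2)
    (h3 : ∃ c ∈ I, 3 ≤ c) : galeLE {1, 3} I := by
  obtain ⟨x, y, hxy, rfl⟩ := pair_cases hc
  have hx : 1 ≤ x := (Finset.mem_Icc.mp (hsub (by simp))).1
  have hy : 3 ≤ y := by
    obtain ⟨c, hc', h3c⟩ := h3
    simp only [Finset.mem_insert, Finset.mem_singleton] at hc'
    rcases hc' with rfl | rfl <;> omega
  refine ⟨by rw [Finset.card_pair (by norm_num), Finset.card_pair hxy.ne], fun m hm => ?_⟩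
  rw [Finset.card_pair (by norm_num : (1:ℕ) ≠ 3)] at hm
  rw [sort_pair (by norm_num : (1:ℕ) < 3), sort_pair hxy]
  interval_cases m <;> simp [List.getD] <;> omega

lemma gale_to12 {B : Finset ℕ} (hsub : B ⊆ Finset.Icc 1 5) (h : galeLE B {1, 2}) :
    B = {1, 2} := by
  have hc : B.card = 2 := by
    have := h.1
    rwa [Finset.card_pair (by norm_num : (1:ℕ) ≠ 2)] at this
  obtain ⟨x, y, hxy, rfl⟩ := pair_cases hc
  have hx : 1 ≤ x := (Finset.mem_Icc.mp (hsub (by simp))).1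
  have h0 := h.2 0 (by rw [Finset.card_pair hxy.ne]; norm_num)
  have h1 := h.2 1 (by rw [Finset.card_pair hxy.ne]; norm_num)
  rw [sort_pair hxy, sort_pair (by norm_num : (1:ℕ) < 2)] at h0 h1
  simp only [List.getD, List.getElem?_cons_zero, List.getElem?_cons_succ, Option.getD_some] at h0 h1
  have hx1 : x = 1 := le_antisymm h0 hx
  have hy2 : y = 2 := le_antisymm h1 (by omega)
  rw [hx1, hy2]

def indic (B : Finset ℕ) : Fin 5 → ℝ := fun i => if (i : ℕ) + 1 ∈ B then 1 else 0

lemma indic_eval (B : Finset ℕ) (i : Fin 5) (n : ℕ) (hn : (i : ℕ) + 1 = n) :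
    indic B i = if n ∈ B then 1 else 0 := by rw [← hn]; rfl

lemma indic_nonneg (B : Finset ℕ) (i : Fin 5) : 0 ≤ indic B i := by
  unfold indic; split <;> norm_num

lemma indic_le_one (B : Finset ℕ) (i : Fin 5) : indic B i ≤ 1 := by
  unfold indic; split <;> norm_num

lemma indic_mem {I B : Finset ℕ} (hB1 : B ⊆ Finset.Icc 1 5) (hB2 : galeLE B I) :
    indic B ∈ schubertPolytope 5 I :=
  subset_convexHull _ _ ⟨B, hB1, hB2, rfl⟩

lemma schub_le {I : Finset ℕ} {f : (Fin 5 → ℝ) → ℝ} (hf : IsLinearMap ℝ f) {t : ℝ}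
    (h : ∀ B : Finset ℕ, B ⊆ Finset.Icc 1 5 → galeLE B I → f (indic B) ≤ t) :
    ∀ p ∈ schubertPolytope 5 I, f p ≤ t := by
  intro p hp
  refine convexHull_min ?_ (convex_halfSpace_le hf t) hp
  rintro x ⟨B, hB1, hB2, rfl⟩
  exact h B hB1 hB2

lemma schub_eq {I : Finset ℕ} {f : (Fin 5 → ℝ) → ℝ} (hf : IsLinearMap ℝ f) {t : ℝ}
    (h : ∀ B : Finset ℕ, B ⊆ Finset.Icc 1 5 → galeLE B I → f (indic B) = t) :
    ∀ p ∈ schubertPolytope 5 I, f p = t := by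
  intro p hp
  refine convexHull_min ?_ (convex_hyperplane hf t) hp
  rintro x ⟨B, hB1, hB2, rfl⟩
  exact h B hB1 hB2

lemma lin_coord (i : Fin 5) : IsLinearMap ℝ (fun x : Fin 5 → ℝ => x i) :=
  ⟨fun _ _ => rfl, fun _ _ => rfl⟩

lemma lin_neg (i : Fin 5) : IsLinearMap ℝ (fun x : Fin 5 → ℝ => -x i) :=
  ⟨fun x y => by simp only [Pi.add_apply]; ring,
   fun c x => by simp only [Pi.smul_apply, smul_eq_mul]; ring⟩

lemma lin_sum : IsLinearMap ℝ (fun x : Fin 5 → ℝ => ∑ i, x i) :=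
  ⟨fun x y => by simp [Finset.sum_add_distrib], fun c x => by simp [Finset.mul_sum]⟩

lemma coord_nonneg {I : Finset ℕ} {p : Fin 5 → ℝ} (hp : p ∈ schubertPolytope 5 I) (i : Fin 5) :
    0 ≤ p i := by
  have h := schub_le (lin_neg i) (t := 0)
    (fun B _ _ => show -(indic B i) ≤ 0 from neg_nonpos.mpr (indic_nonneg B i)) p hp
  linarith

lemma coord_le_one {I : Finset ℕ} {p : Fin 5 → ℝ} (hp : p ∈ schubertPolytope 5 I) (i : Fin 5) :
    p i ≤ 1 :=
  schub_le (lin_coord i) (fun B _ _ => show indic B i ≤ 1 from indic_le_one B i) p hp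

lemma indicSum (B : Finset ℕ) (hB : B ⊆ Finset.Icc 1 5) :
    ∑ i : Fin 5, indic B i = B.card := by
  have h5 : B = Finset.filter (· ∈ B) {1,2,3,4,5} := by
    ext x
    simp only [Finset.mem_filter, Finset.mem_insert, Finset.mem_singleton]
    constructor
    · intro hx
      have h := hB hx
      rw [Finset.mem_Icc] at h
      exact ⟨by omega, hx⟩
    · exact fun h => h.2
  rw [show (B.card : ℝ) = ((Finset.filter (· ∈ B) {1,2,3,4,5}).card : ℝ) from by rw [← h5]]
  rw [Finset.card_filter, Fin.sum_univ_five]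
  rw [Finset.sum_insert (by decide), Finset.sum_insert (by decide), Finset.sum_insert (by decide),
    Finset.sum_insert (by decide), Finset.sum_singleton]
  rw [indic_eval B 0 1 rfl, indic_eval B 1 2 rfl, indic_eval B 2 3 rfl, indic_eval B 3 4 rfl,
    indic_eval B 4 5 rfl]
  by_cases h1 : (1:ℕ) ∈ B <;> by_cases h2 : (2:ℕ) ∈ B <;> by_cases h3 : (3:ℕ) ∈ B <;>
    by_cases h4 : (4:ℕ) ∈ B <;> by_cases h5' : (5:ℕ) ∈ B <;>
    simp [h1, h2, h3, h4, h5'] <;> norm_num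

lemma coord_sum {I : Finset ℕ} {p : Fin 5 → ℝ} (hp : p ∈ schubertPolytope 5 I) :
    ∑ i, p i = I.card :=
  schub_eq lin_sum (fun B hB1 hB2 => by
    show ∑ i : Fin 5, indic B i = _
    rw [indicSum B hB1]
    exact_mod_cast congrArg (Nat.cast : ℕ → ℝ) hB2.1) p hp

lemma claim {Ia Ib : Finset ℕ} (ha5 : Ia ⊆ Finset.Icc 1 5) (ha2 : Ia.card = 2)
    (hb2 : Ib.card = 2) {pa pb : Fin 5 → ℝ}
    (hpa : pa ∈ schubertPolytope 5 Ia) (hpb : pb ∈ schubertPolytope 5 Ib)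
    (hsum : ∀ i, pa i + pb i = ((E ![0,2,1,1,0]) i : ℝ)) : ∃ c ∈ Ia, 3 ≤ c := by
  by_contra hno
  push_neg at hno
  have hIa : Ia = {1, 2} := by
    apply Finset.eq_of_subset_of_card_le
    · intro c hc
      have h1 := ha5 hc
      rw [Finset.mem_Icc] at h1
      have h2 := hno c hc
      simp only [Finset.mem_insert, Finset.mem_singleton]
      omega
    · rw [ha2, show ({1,2} : Finset ℕ).card = 2 from rfl]
  subst hIa
  have hpa2 : pa 2 ≤ 0 := by
    refine schub_le (lin_coord 2) (fun B hB1 hB2 => ?_) pa hpa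
    rw [gale_to12 hB1 hB2]
    show indic {1,2} 2 ≤ 0
    rw [indic_eval _ _ 3 rfl]
    norm_num
  have hpa3 : pa 3 ≤ 0 := by
    refine schub_le (lin_coord 3) (fun B hB1 hB2 => ?_) pa hpa
    rw [gale_to12 hB1 hB2]
    show indic {1,2} 3 ≤ 0
    rw [indic_eval _ _ 4 rfl]
    norm_num
  have hb0 := coord_nonneg hpb 0
  have hb4 := coord_nonneg hpb 4
  have hpa1 : pa 1 ≤ 1 := coord_le_one hpa 1
  have hsb := coord_sum hpb
  rw [Fin.sum_univ_five, hb2] at hsb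
  push_cast at hsb
  have h1 := hsum 1
  have h2 := hsum 2
  have h3 := hsum 3
  norm_num [Eval1] at h1
  norm_num [Eval2] at h2
  norm_num [Eval3] at h3
  linarith

end Stmt19Aux

open Stmt19Aux in
theorem stmt_19 (G : Equiv.Perm (Fin 5) → MvPolynomial (Fin 5) ℤ)
    (hG : IsGrothendieck 5 G) :
    ¬IsSchubitope 5 (convexHull ℝ
      {v : Fin 5 → ℝ | ∃ α ∈ (homogeneousComponent 4 (G w14253)).support,
        v = fun i : Fin 5 => (α i : ℝ)}) := by
  intro hS
  obtain ⟨k, I, hI, hQ⟩ := hS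
  have hsupp := part3 G hG
  set S : Set (Fin 5 → ℝ) := {v : Fin 5 → ℝ | ∃ α ∈ (homogeneousComponent 4 (G w14253)).support,
        v = fun i : Fin 5 => (α i : ℝ)} with hSdef
  set v4 : Fin 5 → ℝ := fun i => ((E ![0,2,1,1,0]) i : ℝ) with hv4def
  set v8 : Fin 5 → ℝ := fun i => ((E ![2,2,0,0,0]) i : ℝ) with hv8def
  have hv4Q : v4 ∈ convexHull ℝ S :=
    subset_convexHull ℝ S ⟨E ![0,2,1,1,0], by rw [hsupp]; simp, rfl⟩
  have hv8Q : v8 ∈ convexHull ℝ S :=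
    subset_convexHull ℝ S ⟨E ![2,2,0,0,0], by rw [hsupp]; simp, rfl⟩
  have hQ0 : ∀ x ∈ convexHull ℝ S, x 0 ≤ 2 := by
    intro x hx
    refine convexHull_min ?_ (convex_halfSpace_le (lin_coord 0) 2) hx
    rintro v ⟨α, hα, rfl⟩
    rw [hsupp] at hα
    simp only [Finset.mem_insert, Finset.mem_singleton] at hα
    rcases hα with h|h|h|h|h|h|h|h <;> subst h <;> norm_num [Eval0]
  have hQ2 : ∀ x ∈ convexHull ℝ S, x 2 ≤ 1 := by
    intro x hx
    refine convexHull_min ?_ (convex_halfSpace_le (lin_coord 2) 1) hx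
    rintro v ⟨α, hα, rfl⟩
    rw [hsupp] at hα
    simp only [Finset.mem_insert, Finset.mem_singleton] at hα
    rcases hα with h|h|h|h|h|h|h|h <;> subst h <;> norm_num [Eval2]
  rw [hQ] at hv4Q hv8Q
  obtain ⟨p, hp, hv4p⟩ := hv4Q
  obtain ⟨q, hq, hv8p⟩ := hv8Q
  have hcard1 : ∀ j, 1 ≤ (I j).card := fun j => Finset.card_pos.2 (hI j).1
  have hcards : ∑ j, (I j).card = 4 := by
    have h1 : ∑ i : Fin 5, v4 i = 4 := by
      rw [Fin.sum_univ_five, hv4def]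
      norm_num [Eval0, Eval1, Eval2, Eval3, Eval4]
    have h2 : ∑ i : Fin 5, v4 i = ∑ j, ((I j).card : ℝ) := by
      rw [hv4p]
      simp only [Finset.sum_apply]
      rw [Finset.sum_comm]
      exact Finset.sum_congr rfl fun j _ => coord_sum (hp j)
    have h3 : ((∑ j, (I j).card : ℕ) : ℝ) = 4 := by push_cast; rw [← h2, h1]
    exact_mod_cast h3
  have hcR : ∑ j, ((I j).card : ℝ) = 4 := by exact_mod_cast congrArg (Nat.cast : ℕ → ℝ) hcards
  have hcard2 : ∀ j, (I j).card ≤ 2 := by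
    intro j0
    by_contra hgt
    push_neg at hgt
    have hqs : ∀ j, q j 0 + q j 1 ≤ ((I j).card : ℝ) := by
      intro j
      have hs := coord_sum (hq j)
      have ha := coord_nonneg (hq j) 2
      have hb := coord_nonneg (hq j) 3
      have hc := coord_nonneg (hq j) 4
      rw [Fin.sum_univ_five] at hs
      linarith
    have hq2 : q j0 0 + q j0 1 ≤ 2 := by
      have := coord_le_one (hq j0) 0
      have := coord_le_one (hq j0) 1
      linarith
    have hsumq : ∑ j, (q j 0 + q j 1) = 4 := by
      have e0 : (∑ j, q j) 0 = 2 := by rw [← hv8p]; norm_num [hv8def, Eval0]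
      have e1 : (∑ j, q j) 1 = 2 := by rw [← hv8p]; norm_num [hv8def, Eval1]
      simp only [Finset.sum_apply] at e0 e1
      rw [Finset.sum_add_distrib, e0, e1]
      norm_num
    have hsplit := Finset.add_sum_erase Finset.univ (fun j => q j 0 + q j 1) (Finset.mem_univ j0)
    have hsplit2 := Finset.add_sum_erase Finset.univ (fun j => ((I j).card : ℝ)) (Finset.mem_univ j0)
    rw [hsumq] at hsplit
    rw [hcR] at hsplit2
    have hrest : ∑ j ∈ Finset.univ.erase j0, (q j 0 + q j 1)
        ≤ ∑ j ∈ Finset.univ.erase j0, ((I j).card : ℝ) :=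
      Finset.sum_le_sum fun j _ => hqs j
    have hge3 : (3 : ℝ) ≤ ((I j0).card : ℝ) := by exact_mod_cast hgt
    linarith
  have hBj : ∀ j, ∃ B : Finset ℕ, B ⊆ Finset.Icc 1 5 ∧ galeLE B (I j) ∧ (1:ℕ) ∈ B := by
    intro j
    by_cases hc : (I j).card = 1
    · exact ⟨{1}, by decide, gale1 (hI j).2 hc, by decide⟩
    · have hc2 : (I j).card = 2 := by have := hcard1 j; have := hcard2 j; omega
      exact ⟨{1, 2}, by decide, gale12 (hI j).2 hc2, by decide⟩
  choose Bf hBsub hBgale hB1 using hBj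
  have htQ : (∑ j, indic (Bf j)) ∈ convexHull ℝ S := by
    rw [hQ]
    exact ⟨fun j => indic (Bf j), fun j => indic_mem (hBsub j) (hBgale j), rfl⟩
  have htk : (∑ j, indic (Bf j)) 0 = (k : ℝ) := by
    simp only [Finset.sum_apply]
    rw [Finset.sum_congr rfl (fun j _ => show indic (Bf j) 0 = (1:ℝ) from by
      rw [indic_eval _ _ 1 rfl, if_pos (hB1 j)])]
    simp
  have hk2 : k ≤ 2 := by
    have h := hQ0 _ htQ
    rw [htk] at h
    exact_mod_cast h
  have hk2' : 2 ≤ k := by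
    by_contra h
    push_neg at h
    have hle : ∑ j, (I j).card ≤ ∑ _j : Fin k, 2 :=
      Finset.sum_le_sum fun j _ => hcard2 j
    rw [Finset.sum_const, Finset.card_univ, Fintype.card_fin, smul_eq_mul] at hle
    omega
  have hk : k = 2 := le_antisymm hk2 hk2'
  subst hk
  have hc01 : (I 0).card = 2 ∧ (I 1).card = 2 := by
    have h := hcards
    rw [Fin.sum_univ_two] at h
    have := hcard2 0
    have := hcard2 1
    omega
  have hsum01 : ∀ i, p 0 i + p 1 i = ((E ![0,2,1,1,0]) i : ℝ) := by
    intro i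
    have h := congrFun hv4p i
    rw [hv4def] at h
    simp only [Finset.sum_apply, Fin.sum_univ_two] at h
    exact h.symm
  have hmax0 : ∃ c ∈ I 0, 3 ≤ c :=
    claim (hI 0).2 hc01.1 hc01.2 (hp 0) (hp 1) hsum01
  have hmax1 : ∃ c ∈ I 1, 3 ≤ c :=
    claim (hI 1).2 hc01.2 hc01.1 (hp 1) (hp 0)
      (fun i => by rw [add_comm]; exact hsum01 i)
  have g13 : ∀ j : Fin 2, galeLE {1, 3} (I j) := by
    intro j
    fin_cases j
    · exact gale13 (hI 0).2 hc01.1 hmax0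
    · exact gale13 (hI 1).2 hc01.2 hmax1
  have hxQ : (∑ _j : Fin 2, indic {1, 3}) ∈ convexHull ℝ S := by
    rw [hQ]
    exact ⟨fun _j => indic {1, 3}, fun j => indic_mem (by decide) (g13 j), rfl⟩
  have h := hQ2 _ hxQ
  simp only [Finset.sum_apply, Fin.sum_univ_two] at h
  have hval : indic {1, 3} 2 = (1:ℝ) := by
    rw [indic_eval _ _ 3 rfl]
    norm_num
  rw [hval] at h
  norm_num at h
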